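/- Assume that for every x ∈ ℝ^d and every k ∈ {1,…,d} the matrix (A(x)^{-1})^T ∂_k(A^{-1})(x) is symmetric. Then for all compactly supported smooth vector fields F, G : ℝ^d → ℝ^d one has ∫ (𝕃_A F)^T S G dμ = ∫ F^T S (𝕃_A G) dμ = − ∫ Σ_k (∂_k F)^T S (∂_k G) dμ; in particular ∫ (𝕃_A F)^T S F dμ ≤ 0. -/

import Mathlib

open Real MeasureTheory Matrix

noncomputable section

abbrev Euc (d : ℕ) := Fin d → ℝ

/-- partial derivative in direction `i`. -/
def pd {d : ℕ} (i : Fin d) (f : Euc d → ℝ) (x : Euc d) : ℝ :=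
  fderiv ℝ f x (Pi.single i 1)

/-- Euclidean gradient. -/
def gradv {d : ℕ} (f : Euc d → ℝ) (x : Euc d) : Euc d := fun i => pd i f x

/-- The diffusion operator `L f = Δ f - ∇V ⋅ ∇f`. -/
def Lop {d : ℕ} (V f : Euc d → ℝ) (x : Euc d) : ℝ :=
  (∑ i, pd i (pd i f) x) - gradv V x ⬝ᵥ gradv f x

/-- Hessian matrix. -/
def hessM {d : ℕ} (V : Euc d → ℝ) (x : Euc d) : Matrix (Fin d) (Fin d) ℝ :=
  Matrix.of fun i j => pd i (pd j V) x

/-- Componentwise application of `L` to a vector field. -/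
def vecL {d : ℕ} (V : Euc d → ℝ) (F : Euc d → Euc d) (x : Euc d) : Euc d :=
  fun i => Lop V (fun y => F y i) x

/-- Entrywise application of `L` to a matrix field. -/
def matL {d : ℕ} (V : Euc d → ℝ) (M : Euc d → Matrix (Fin d) (Fin d) ℝ) (x : Euc d) :
    Matrix (Fin d) (Fin d) ℝ :=
  Matrix.of fun i j => Lop V (fun y => M y i j) x

/-- Jacobian matrix of a vector field: `(jac H x) i j = ∂_j H_i (x)`. -/
def jac {d : ℕ} (H : Euc d → Euc d) (x : Euc d) : Matrix (Fin d) (Fin d) ℝ :=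
  Matrix.of fun i j => pd j (fun y => H y i) x

/-- `(∇A⁻¹ ∇F)_i = ∑_{j,k} ∂_k (A⁻¹)_{i,j} ∂_k F_j`. -/
def gAinvG {d : ℕ} (A : Euc d → Matrix (Fin d) (Fin d) ℝ) (F : Euc d → Euc d) (x : Euc d) :
    Euc d :=
  fun i => ∑ j, ∑ k, pd k (fun y => (A y)⁻¹ i j) x * pd k (fun y => F y j) x

/-- The operator `𝕃_A F = 𝕃 F + 2 A ∇A⁻¹ ∇F`. -/
def LA {d : ℕ} (V : Euc d → ℝ) (A : Euc d → Matrix (Fin d) (Fin d) ℝ) (F : Euc d → Euc d)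
    (x : Euc d) : Euc d :=
  vecL V F x + (2 : ℝ) • (A x *ᵥ gAinvG A F x)

/-- The matrix field `M_A = A (∇²V) A⁻¹ - A (𝕃 A⁻¹)`. -/
def MA {d : ℕ} (V : Euc d → ℝ) (A : Euc d → Matrix (Fin d) (Fin d) ℝ) (x : Euc d) :
    Matrix (Fin d) (Fin d) ℝ :=
  A x * hessM V x * (A x)⁻¹ - A x * matL V (fun y => (A y)⁻¹) x

/-- The Schrödinger-type operator `𝕃_A^{M_A} F = 𝕃_A F - M_A F`. -/
def LAM {d : ℕ} (V : Euc d → ℝ) (A : Euc d → Matrix (Fin d) (Fin d) ℝ) (F : Euc d → Euc d)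
    (x : Euc d) : Euc d :=
  LA V A F x - MA V A x *ᵥ F x

/-- The matrix field `S = (A Aᵀ)⁻¹`. -/
def Smat {d : ℕ} (A : Euc d → Matrix (Fin d) (Fin d) ℝ) (x : Euc d) :
    Matrix (Fin d) (Fin d) ℝ :=
  (A x * (A x)ᵀ)⁻¹

/-- The probability measure with density proportional to `e^{-V}`. -/
def gibbs {d : ℕ} (V : Euc d → ℝ) : Measure (Euc d) :=
  (ENNReal.ofReal (∫ x, Real.exp (-V x)))⁻¹ •
    MeasureTheory.volume.withDensity fun x => ENNReal.ofReal (Real.exp (-V x))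

/-- Variance with respect to a measure. -/
def Var' {d : ℕ} (μ : Measure (Euc d)) (f : Euc d → ℝ) : ℝ :=
  (∫ x, f x ^ 2 ∂μ) - (∫ x, f x ∂μ) ^ 2


local notation "sm" => ContDiff ℝ (⊤ : ℕ∞)

lemma smooth_pd {d : ℕ} {f : Euc d → ℝ} (hf : sm f) (i : Fin d) : sm (pd i f) :=
  ((hf.fderiv_right (by exact_mod_cast le_top)).clm_apply contDiff_const)

lemma sdiff {d : ℕ} {E : Type*} [NormedAddCommGroup E] [NormedSpace ℝ E] {f : Euc d → E}
    (hf : sm f) (x : Euc d) : DifferentiableAt ℝ f x :=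
  hf.differentiable (by simp) x

lemma smooth_apply {d : ℕ} {F : Euc d → Euc d} (hF : sm F) (i : Fin d) :
    sm (fun y => F y i) :=
  (contDiff_apply ℝ ℝ i).comp hF

lemma smooth_expV {d : ℕ} {V : Euc d → ℝ} (hV : sm V) : sm (fun y => Real.exp (-V y)) :=
  Real.contDiff_exp.comp hV.neg

lemma smooth_Lop {d : ℕ} {V v : Euc d → ℝ} (hV : sm V) (hv : sm v) : sm (Lop V v) := by
  have : Lop V v = fun x => (∑ i, pd i (pd i v) x) - ∑ i, pd i V x * pd i v x := by
    funext x; simp [Lop, gradv, dotProduct]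
  rw [this]
  exact (ContDiff.sum fun i _ => smooth_pd (smooth_pd hv i) i).sub
    (ContDiff.sum fun i _ => (smooth_pd hV i).mul (smooth_pd hv i))

lemma pd_mul {d : ℕ} {u v : Euc d → ℝ} {x : Euc d} (i : Fin d)
    (hu : DifferentiableAt ℝ u x) (hv : DifferentiableAt ℝ v x) :
    pd i (fun y => u y * v y) x = pd i u x * v x + u x * pd i v x := by
  unfold pd
  rw [fderiv_fun_mul hu hv]
  simp only [ContinuousLinearMap.add_apply, ContinuousLinearMap.smul_apply, smul_eq_mul]; ring

lemma pd_sum {d : ℕ} {ι : Type*} (s : Finset ι) {f : ι → Euc d → ℝ} {x : Euc d} (i : Fin d)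
    (hf : ∀ j ∈ s, DifferentiableAt ℝ (f j) x) :
    pd i (fun y => ∑ j ∈ s, f j y) x = ∑ j ∈ s, pd i (f j) x := by
  unfold pd
  rw [fderiv_fun_sum hf]
  simp

lemma pd_add {d : ℕ} {u v : Euc d → ℝ} {x : Euc d} (i : Fin d)
    (hu : DifferentiableAt ℝ u x) (hv : DifferentiableAt ℝ v x) :
    pd i (fun y => u y + v y) x = pd i u x + pd i v x := by
  unfold pd; rw [fderiv_fun_add hu hv]; simp

lemma pd_exp_neg {d : ℕ} {V : Euc d → ℝ} {x : Euc d} (i : Fin d)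
    (hV : DifferentiableAt ℝ V x) :
    pd i (fun y => Real.exp (-V y)) x = -pd i V x * Real.exp (-V x) := by
  unfold pd
  have h : HasFDerivAt (fun y => Real.exp (-V y))
      (Real.exp (-V x) • (-(fderiv ℝ V x))) x := by
    simpa [Function.comp_def] using (Real.hasDerivAt_exp (-V x)).comp_hasFDerivAt x hV.hasFDerivAt.neg
  rw [h.fderiv]
  simp [mul_comm]

lemma pd_fun_mul {d : ℕ} {u v : Euc d → ℝ} (i : Fin d) (hu : sm u) (hv : sm v) :
    pd i (fun y => u y * v y) = fun x => pd i u x * v x + u x * pd i v x :=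
  funext fun x => pd_mul i (sdiff hu x) (sdiff hv x)

lemma Lop_mul {d : ℕ} {V u v : Euc d → ℝ} {x : Euc d} (hV : sm V) (hu : sm u) (hv : sm v) :
    Lop V (fun y => u y * v y) x
      = u x * Lop V v x + v x * Lop V u x + 2 * ∑ k, pd k u x * pd k v x := by
  unfold Lop
  have h1 : ∀ k : Fin d, pd k (pd k (fun y => u y * v y)) x
      = pd k (pd k u) x * v x + 2 * (pd k u x * pd k v x) + u x * pd k (pd k v) x := by
    intro k
    rw [pd_fun_mul k hu hv]
    have := pd_add k (x := x) (u := fun y => pd k u y * v y) (v := fun y => u y * pd k v y)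
      (sdiff ((smooth_pd hu k).mul hv) x) (sdiff (hu.mul (smooth_pd hv k)) x)
    rw [show (fun x => pd k u x * v x + u x * pd k v x)
        = (fun y => pd k u y * v y + u y * pd k v y) from rfl, this,
      pd_mul k (sdiff (smooth_pd hu k) x) (sdiff hv x),
      pd_mul k (sdiff hu x) (sdiff (smooth_pd hv k) x)]
    ring
  rw [Finset.sum_congr rfl fun k _ => h1 k]
  simp only [dotProduct, gradv]
  rw [← Finset.sum_sub_distrib]
  simp only [mul_sub, Finset.mul_sum]
  rw [← Finset.sum_sub_distrib, ← Finset.sum_sub_distrib, ← Finset.sum_add_distrib,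
    ← Finset.sum_add_distrib]
  refine Finset.sum_congr rfl fun k _ => ?_
  rw [pd_mul k (sdiff hu x) (sdiff hv x)]
  ring

lemma Lop_sum {d : ℕ} {ι : Type*} (s : Finset ι) {V : Euc d → ℝ} {f : ι → Euc d → ℝ}
    {x : Euc d} (hf : ∀ j ∈ s, sm (f j)) :
    Lop V (fun y => ∑ j ∈ s, f j y) x = ∑ j ∈ s, Lop V (f j) x := by
  simp only [Lop, gradv, dotProduct]
  have hA : ∀ z : Euc d, ∀ k : Fin d, pd k (fun y => ∑ j ∈ s, f j y) z = ∑ j ∈ s, pd k (f j) z :=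
    fun z k => pd_sum s k fun j hj => sdiff (hf j hj) z
  have hB : ∀ k : Fin d, pd k (pd k (fun y => ∑ j ∈ s, f j y)) x
      = ∑ j ∈ s, pd k (pd k (f j)) x := by
    intro k
    rw [show pd k (fun y => ∑ j ∈ s, f j y) = fun z => ∑ j ∈ s, pd k (f j) z from
      funext fun z => hA z k]
    exact pd_sum s k fun j hj => sdiff (smooth_pd (hf j hj) k) x
  rw [Finset.sum_congr rfl fun k _ => hB k,
    Finset.sum_congr rfl (fun k _ => by rw [hA x k] :
      ∀ k ∈ Finset.univ, pd k V x * pd k (fun y => ∑ j ∈ s, f j y) x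
        = pd k V x * ∑ j ∈ s, pd k (f j) x)]
  rw [Finset.sum_comm]
  simp only [Finset.mul_sum]
  rw [Finset.sum_comm (s := Finset.univ) (t := s)]
  exact (Finset.sum_sub_distrib _ _).symm

lemma integral_div_eq_zero {d : ℕ} (hd : 1 ≤ d) (w : Fin d → Euc d → ℝ)
    (hw : ∀ k, sm (w k)) (hsupp : ∀ k, HasCompactSupport (w k)) :
    ∫ x : Euc d, ∑ k, pd k (w k) x = 0 := by
  obtain ⟨n, rfl⟩ : ∃ n, d = n + 1 := ⟨d - 1, (Nat.succ_pred_eq_of_pos hd).symm⟩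
  have hK : IsCompact (⋃ k, tsupport (w k)) := isCompact_iUnion (fun k => hsupp k)
  obtain ⟨R, hR0, hR⟩ := hK.isBounded.subset_ball_lt 0 0
  set a : Euc (n+1) := fun _ => -R with ha
  set b : Euc (n+1) := fun _ => R with hb
  have hle : a ≤ b := fun i => by simp [ha, hb]; linarith
  have hzero : ∀ (x : Euc (n+1)) (k : Fin (n+1)), R ≤ |x k| → w k x = 0 := by
    intro x k hxk
    apply image_eq_zero_of_notMem_tsupport
    intro hx
    have hxball : x ∈ Metric.ball (0 : Euc (n+1)) R := hR (Set.mem_iUnion.2 ⟨k, hx⟩)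
    have : ‖x‖ < R := by simpa using hxball
    exact absurd (le_trans hxk (by simpa using norm_le_pi_norm x k)) (not_le.2 this)
  have hdiff : ∀ (x : Euc (n+1)) (k : Fin (n+1)), x ∉ Set.Icc a b → pd k (w k) x = 0 := by
    intro x k hx
    have hxt : x ∉ tsupport (w k) := by
      intro hxt
      apply hx
      have hxball : x ∈ Metric.ball (0 : Euc (n+1)) R := hR (Set.mem_iUnion.2 ⟨k, hxt⟩)
      have hn : ‖x‖ < R := by simpa using hxball
      constructor <;> intro i <;>
        have := (abs_le.1 ((norm_le_pi_norm x i).trans hn.le)) <;> simp [ha, hb] <;>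
        linarith [this.1, this.2]
    unfold pd
    rw [Function.notMem_support.mp (fun hs => hxt (support_fderiv_subset ℝ hs))]
    simp
  have key := MeasureTheory.integral_divergence_of_hasFDerivAt_off_countable' a b hle
      w (fun k x => fderiv ℝ (w k) x) ∅ Set.countable_empty
      (fun k => ((hw k).continuous).continuousOn)
      (fun x _ k => ((hw k).differentiable (by simp) x).hasFDerivAt)
      (((continuous_finset_sum _ (fun k _ => ((hw k).fderiv_right (m := (⊤:ℕ∞))
        (by exact_mod_cast le_top)).continuous.clm_apply
          continuous_const)).continuousOn).integrableOn_compact isCompact_Icc)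
  have hfront : ∀ (k : Fin (n+1)) (y : Euc n), w k (k.insertNth (b k) y) = 0 := by
    intro k y
    apply hzero
    simp [hb, abs_of_nonneg hR0.le]
  have hback : ∀ (k : Fin (n+1)) (y : Euc n), w k (k.insertNth (a k) y) = 0 := by
    intro k y
    apply hzero
    simp [ha, abs_of_nonpos (by linarith : -R ≤ 0)]
  rw [← setIntegral_eq_integral_of_forall_compl_eq_zero
      (fun x hx => by rw [Finset.sum_eq_zero (fun k _ => hdiff x k hx)])]
  unfold pd
  rw [key]
  apply Finset.sum_eq_zero
  intro k _
  simp [hfront, hback]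

lemma ibp {d : ℕ} (hd : 1 ≤ d) {V u v : Euc d → ℝ} (hV : sm V) (hu : sm u)
    (hcu : HasCompactSupport u) (hv : sm v) :
    ∫ x : Euc d, u x * Lop V v x * Real.exp (-V x)
      = -∫ x : Euc d, (∑ k, pd k u x * pd k v x) * Real.exp (-V x) := by
  set w : Fin d → Euc d → ℝ := fun k y => u y * (pd k v y * Real.exp (-V y)) with hw
  have hsmw : ∀ k, sm (w k) := fun k => hu.mul ((smooth_pd hv k).mul (smooth_expV hV))
  have hsuppw : ∀ k, HasCompactSupport (w k) := fun k => hcu.mul_right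
  have h0 := integral_div_eq_zero hd w hsmw hsuppw
  have hpt : ∀ x : Euc d, ∑ k, pd k (w k) x
      = u x * Lop V v x * Real.exp (-V x) + (∑ k, pd k u x * pd k v x) * Real.exp (-V x) := by
    intro x
    have hterm : ∀ k : Fin d, pd k (w k) x
        = pd k u x * pd k v x * Real.exp (-V x)
          + u x * (pd k (pd k v) x * Real.exp (-V x)
            + pd k v x * (-pd k V x * Real.exp (-V x))) := by
      intro k
      rw [hw]
      rw [pd_mul k (sdiff hu x) (sdiff ((smooth_pd hv k).mul (smooth_expV hV)) x),
        pd_mul k (sdiff (smooth_pd hv k) x) (sdiff (smooth_expV hV) x),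
        pd_exp_neg k (sdiff hV x)]
      ring
    rw [Finset.sum_congr rfl (fun k _ => hterm k)]
    simp only [Lop, gradv, dotProduct]
    simp only [sub_mul, Finset.sum_mul, mul_sub, Finset.mul_sum, ← Finset.sum_add_distrib,
      ← Finset.sum_sub_distrib]
    exact Finset.sum_congr rfl (fun k _ => by ring)
  rw [integral_congr_ae (Filter.Eventually.of_forall hpt)] at h0
  have hc1 : Continuous fun x => u x * Lop V v x * Real.exp (-V x) :=
    ((hu.continuous.mul (smooth_Lop hV hv).continuous).mul (smooth_expV hV).continuous)
  have hc2 : Continuous fun x => (∑ k, pd k u x * pd k v x) * Real.exp (-V x) :=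
    ((continuous_finset_sum _ fun k _ =>
      (smooth_pd hu k).continuous.mul (smooth_pd hv k).continuous).mul
        (smooth_expV hV).continuous)
  have hs1 : HasCompactSupport fun x => u x * Lop V v x * Real.exp (-V x) := by
    apply HasCompactSupport.intro hcu
    intro x hx
    rw [image_eq_zero_of_notMem_tsupport hx]
    ring
  have hs2 : HasCompactSupport fun x => (∑ k, pd k u x * pd k v x) * Real.exp (-V x) := by
    apply HasCompactSupport.intro hcu
    intro x hx
    have hpd : ∀ k : Fin d, pd k u x = 0 := by
      intro k
      unfold pd
      rw [Function.notMem_support.mp (fun hs => hx (support_fderiv_subset ℝ hs))]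
      simp
    rw [Finset.sum_eq_zero (fun k _ => by rw [hpd k]; ring)]
    ring
  have hint1 : Integrable (fun x => u x * Lop V v x * Real.exp (-V x)) :=
    hc1.integrable_of_hasCompactSupport hs1
  have hint2 : Integrable (fun x => (∑ k, pd k u x * pd k v x) * Real.exp (-V x)) :=
    hc2.integrable_of_hasCompactSupport hs2
  rw [integral_add hint1 hint2] at h0
  linarith

lemma smooth_prod {d : ℕ} {ι : Type*} (s : Finset ι) (f : ι → Euc d → ℝ)
    (h : ∀ i ∈ s, sm (f i)) : sm (fun y => ∏ i ∈ s, f i y) := by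
  classical
  induction s using Finset.induction_on with
  | empty => simpa using contDiff_const
  | insert _ _ hj ih =>
      simp only [Finset.prod_insert hj]
      exact (h _ (Finset.mem_insert_self _ _)).mul
        (ih fun i hi => h i (Finset.mem_insert_of_mem hi))

lemma smooth_det {d n : ℕ} {M : Euc d → Matrix (Fin n) (Fin n) ℝ}
    (h : ∀ i j, sm (fun y => M y i j)) : sm (fun y => (M y).det) := by
  have : (fun y => (M y).det)
      = fun y => ∑ σ : Equiv.Perm (Fin n), (Equiv.Perm.sign σ : ℝ) * ∏ i, M y (σ i) i := by
    funext y
    rw [Matrix.det_apply]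
    simp [Units.smul_def, zsmul_eq_mul]
  rw [this]
  exact ContDiff.sum fun σ _ => contDiff_const.mul (smooth_prod _ _ fun i _ => h (σ i) i)

lemma smooth_inv_entry {d : ℕ} {A : Euc d → Matrix (Fin d) (Fin d) ℝ}
    (hA : ∀ i j, sm (fun y => A y i j)) (hdet : ∀ y, IsUnit (A y).det) (i j : Fin d) :
    sm (fun y => (A y)⁻¹ i j) := by
  have h1 : (fun y => (A y)⁻¹ i j) = fun y => ((A y).det)⁻¹ * (A y).adjugate i j := by
    funext y
    rw [Matrix.inv_def, Ring.inverse_eq_inv]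
    simp [Matrix.smul_apply]
  rw [h1]
  refine ContDiff.mul (ContDiff.inv (smooth_det hA) fun y => (hdet y).ne_zero) ?_
  have h2 : (fun y => (A y).adjugate i j) = fun y => ((A y).updateRow j (Pi.single i 1)).det := by
    funext y; rw [Matrix.adjugate_apply]
  rw [h2]
  apply smooth_det
  intro a b
  rcases eq_or_ne a j with rfl | hne
  · simpa [Matrix.updateRow_apply] using contDiff_const
  · simpa [Matrix.updateRow_apply, hne] using hA a b

lemma helper1 {d : ℕ} (M N : Matrix (Fin d) (Fin d) ℝ) (a b : Euc d) :
    (M *ᵥ a) ⬝ᵥ (N *ᵥ b) = a ⬝ᵥ ((Mᵀ * N) *ᵥ b) := by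
  rw [← Matrix.vecMul_transpose, dotProduct_mulVec, Matrix.vecMul_vecMul, ← dotProduct_mulVec]

lemma S5k {d : ℕ} (β βk : Matrix (Fin d) (Fin d) ℝ) (hsymk : (βᵀ * βk).IsSymm)
    (φ φ' γ γ' : Euc d) :
    (βk *ᵥ φ + β *ᵥ φ') ⬝ᵥ (βk *ᵥ γ + β *ᵥ γ')
      - ((βk *ᵥ φ + β *ᵥ φ') ⬝ᵥ (βk *ᵥ γ) + (β *ᵥ φ) ⬝ᵥ (βk *ᵥ γ'))
      = φ' ⬝ᵥ ((βᵀ * β) *ᵥ γ') := by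
  have hks : βkᵀ * β = βᵀ * βk := by
    rw [← hsymk, Matrix.transpose_mul, Matrix.transpose_transpose]
  simp only [dotProduct_add, add_dotProduct]
  rw [helper1 βk β φ γ', helper1 β βk φ γ', helper1 β β φ' γ', hks]
  ring

lemma smat_eq {d : ℕ} (A : Matrix (Fin d) (Fin d) ℝ) :
    (A * Aᵀ)⁻¹ = (A⁻¹)ᵀ * A⁻¹ := by
  rw [Matrix.mul_inv_rev, Matrix.transpose_nonsing_inv]

lemma dot_smat {d : ℕ} (A : Matrix (Fin d) (Fin d) ℝ) (a b : Euc d) :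
    a ⬝ᵥ ((A * Aᵀ)⁻¹ *ᵥ b) = (A⁻¹ *ᵥ a) ⬝ᵥ (A⁻¹ *ᵥ b) := by
  rw [smat_eq, (helper1 A⁻¹ A⁻¹ a b).symm]

lemma dot_smat_symm {d : ℕ} (A : Matrix (Fin d) (Fin d) ℝ) (a b : Euc d) :
    a ⬝ᵥ ((A * Aᵀ)⁻¹ *ᵥ b) = b ⬝ᵥ ((A * Aᵀ)⁻¹ *ᵥ a) := by
  rw [dot_smat, dot_smat, dotProduct_comm]

lemma dot_smat_nonneg {d : ℕ} (A : Matrix (Fin d) (Fin d) ℝ) (a : Euc d) :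
    0 ≤ a ⬝ᵥ ((A * Aᵀ)⁻¹ *ᵥ a) := by
  rw [dot_smat]
  exact Finset.sum_nonneg fun i _ => mul_self_nonneg _


/-- `A⁻¹ *ᵥ F`, written with explicit sums. -/
def Ftd {d : ℕ} (A : Euc d → Matrix (Fin d) (Fin d) ℝ) (F : Euc d → Euc d)
    (y : Euc d) (p : Fin d) : ℝ := ∑ j, (A y)⁻¹ p j * F y j

lemma key {d : ℕ} (hd : 1 ≤ d) {V : Euc d → ℝ} (hV : sm V)
    {A : Euc d → Matrix (Fin d) (Fin d) ℝ} (hA : ∀ i j, sm fun x => A x i j)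
    (hAinv : ∀ x, IsUnit (A x).det)
    (hsym : ∀ (x : Euc d) (k : Fin d),
      (((A x)⁻¹)ᵀ * Matrix.of fun i j => pd k (fun y => (A y)⁻¹ i j) x).IsSymm)
    {F G : Euc d → Euc d} (hF : sm F) (hcF : HasCompactSupport F) (hG : sm G)
    (hcG : HasCompactSupport G) :
    ∫ x : Euc d, Real.exp (-V x) * (F x ⬝ᵥ (Smat A x *ᵥ LA V A G x))
      = -∫ x : Euc d, Real.exp (-V x) * ∑ k, (fun i => pd k (fun y => F y i) x) ⬝ᵥ
          (Smat A x *ᵥ fun i => pd k (fun y => G y i) x) := by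
  classical
  have hB : ∀ p j, sm fun y => (A y)⁻¹ p j := fun p j => smooth_inv_entry hA hAinv p j
  have smF : ∀ j, sm fun y => F y j := fun j => smooth_apply hF j
  have smG : ∀ j, sm fun y => G y j := fun j => smooth_apply hG j
  have smFt : ∀ p, sm fun y => Ftd A F y p := fun p =>
    ContDiff.sum fun j _ => (hB p j).mul (smF j)
  have smGt : ∀ p, sm fun y => Ftd A G y p := fun p =>
    ContDiff.sum fun j _ => (hB p j).mul (smG j)
  have hFtzero : ∀ x, x ∉ tsupport F → ∀ p, Ftd A F x p = 0 := by
    intro x hx p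
    have hF0 : F x = 0 := image_eq_zero_of_notMem_tsupport hx
    simp [Ftd, hF0]
  have hcFt : ∀ p, HasCompactSupport fun y => Ftd A F y p := fun p =>
    HasCompactSupport.intro hcF (fun x hx => hFtzero x hx p)
  have hcFtG : ∀ p q, HasCompactSupport fun y => Ftd A F y p * G y q := fun p q =>
    (hcFt p).mul_right
  have hpdzero : ∀ (u : Euc d → ℝ), (∀ z, z ∉ tsupport F → u z = 0) →
      ∀ x, x ∉ tsupport F → ∀ k, pd k u x = 0 := by
    intro u hu x hx k
    have hsup : Function.support u ⊆ tsupport F := fun z hz => by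
      by_contra hzn; exact hz (hu z hzn)
    have hxt : x ∉ tsupport u :=
      fun hxx => hx (closure_minimal hsup (isClosed_tsupport F) hxx)
    unfold pd
    rw [Function.notMem_support.mp (fun hs => hxt (support_fderiv_subset ℝ hs))]
    simp
  -- Step S1 : pointwise conjugation identity
  have S1 : ∀ x : Euc d, F x ⬝ᵥ (Smat A x *ᵥ LA V A G x)
      = (∑ p, Ftd A F x p * Lop V (fun y => Ftd A G y p) x)
        - ∑ p, ∑ q, Ftd A F x p * G x q * Lop V (fun y => (A y)⁻¹ p q) x := by
    intro x
    have h3 : (A x)⁻¹ *ᵥ LA V A G x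
        = fun p => Lop V (fun y => Ftd A G y p) x
            - ∑ q, G x q * Lop V (fun y => (A y)⁻¹ p q) x := by
      funext p
      have hGtL : Lop V (fun y => Ftd A G y p) x
          = ∑ q, ((A x)⁻¹ p q * Lop V (fun y => G y q) x
              + G x q * Lop V (fun y => (A y)⁻¹ p q) x
              + 2 * ∑ k, pd k (fun y => (A y)⁻¹ p q) x * pd k (fun y => G y q) x) := by
        rw [show (fun y => Ftd A G y p) = fun y => ∑ q, (A y)⁻¹ p q * G y q from rfl,
          Lop_sum Finset.univ (fun q _ => (hB p q).mul (smG q))]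
        exact Finset.sum_congr rfl fun q _ => Lop_mul hV (hB p q) (smG q)
      show ((A x)⁻¹ *ᵥ LA V A G x) p = _
      unfold LA
      rw [Matrix.mulVec_add, Matrix.mulVec_smul, Matrix.mulVec_mulVec,
        Matrix.nonsing_inv_mul _ (hAinv x), Matrix.one_mulVec]
      rw [hGtL]
      simp only [Pi.add_apply, Pi.smul_apply, smul_eq_mul, Matrix.mulVec, dotProduct,
        vecL, gAinvG, Finset.sum_add_distrib]
      rw [← Finset.mul_sum]
      ring
    rw [show Smat A x = ((A x) * (A x)ᵀ)⁻¹ from rfl, dot_smat,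
      show (A x)⁻¹ *ᵥ F x = fun p => Ftd A F x p from by
        funext p; simp [Ftd, Matrix.mulVec, dotProduct], h3]
    simp only [dotProduct, mul_sub, Finset.mul_sum]
    rw [Finset.sum_sub_distrib]
    congr 1
    exact Finset.sum_congr rfl fun p _ => Finset.sum_congr rfl fun q _ => by ring
  -- Step S5 : pointwise identity for the first-order terms
  have S5 : ∀ x : Euc d,
      (∑ p, ∑ k, pd k (fun y => Ftd A F y p) x * pd k (fun y => Ftd A G y p) x)
        - ∑ p, ∑ q, ∑ k, pd k (fun y => Ftd A F y p * G y q) x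
            * pd k (fun y => (A y)⁻¹ p q) x
      = ∑ k, (fun i => pd k (fun y => F y i) x) ⬝ᵥ
          (Smat A x *ᵥ fun i => pd k (fun y => G y i) x) := by
    intro x
    rw [Finset.sum_comm]
    rw [Finset.sum_congr rfl fun p (_ : p ∈ Finset.univ) =>
      (Finset.sum_comm (s := (Finset.univ : Finset (Fin d)))
        (t := (Finset.univ : Finset (Fin d)))
        (f := fun q k => pd k (fun y => Ftd A F y p * G y q) x
          * pd k (fun y => (A y)⁻¹ p q) x))]
    rw [Finset.sum_comm (s := (Finset.univ : Finset (Fin d)))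
        (t := (Finset.univ : Finset (Fin d)))
        (f := fun p k => ∑ q, pd k (fun y => Ftd A F y p * G y q) x
          * pd k (fun y => (A y)⁻¹ p q) x)]
    rw [← Finset.sum_sub_distrib]
    refine Finset.sum_congr rfl fun k _ => ?_
    have b1 : (fun p => pd k (fun y => Ftd A F y p) x)
        = (Matrix.of fun p j => pd k (fun y => (A y)⁻¹ p j) x) *ᵥ F x
          + (A x)⁻¹ *ᵥ (fun j => pd k (fun y => F y j) x) := by
      funext p
      rw [show (fun y => Ftd A F y p) = fun y => ∑ j, (A y)⁻¹ p j * F y j from rfl,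
        pd_sum Finset.univ k (fun j _ => sdiff ((hB p j).mul (smF j)) x)]
      simp only [Pi.add_apply, Matrix.mulVec, dotProduct, Matrix.of_apply]
      rw [← Finset.sum_add_distrib]
      exact Finset.sum_congr rfl fun j _ => pd_mul k (sdiff (hB p j) x) (sdiff (smF j) x)
    have b2 : (fun p => pd k (fun y => Ftd A G y p) x)
        = (Matrix.of fun p j => pd k (fun y => (A y)⁻¹ p j) x) *ᵥ G x
          + (A x)⁻¹ *ᵥ (fun j => pd k (fun y => G y j) x) := by
      funext p
      rw [show (fun y => Ftd A G y p) = fun y => ∑ j, (A y)⁻¹ p j * G y j from rfl,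
        pd_sum Finset.univ k (fun j _ => sdiff ((hB p j).mul (smG j)) x)]
      simp only [Pi.add_apply, Matrix.mulVec, dotProduct, Matrix.of_apply]
      rw [← Finset.sum_add_distrib]
      exact Finset.sum_congr rfl fun j _ => pd_mul k (sdiff (hB p j) x) (sdiff (smG j) x)
    have hFtvec : (fun p => Ftd A F x p) = (A x)⁻¹ *ᵥ F x := by
      funext p; simp [Ftd, Matrix.mulVec, dotProduct]
    have b3 : (∑ p, pd k (fun y => Ftd A F y p) x * pd k (fun y => Ftd A G y p) x)
        = ((Matrix.of fun p j => pd k (fun y => (A y)⁻¹ p j) x) *ᵥ F x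
            + (A x)⁻¹ *ᵥ (fun j => pd k (fun y => F y j) x)) ⬝ᵥ
          ((Matrix.of fun p j => pd k (fun y => (A y)⁻¹ p j) x) *ᵥ G x
            + (A x)⁻¹ *ᵥ (fun j => pd k (fun y => G y j) x)) := by
      rw [← b1, ← b2]; rfl
    have b4 : (∑ p, ∑ q, pd k (fun y => Ftd A F y p * G y q) x
          * pd k (fun y => (A y)⁻¹ p q) x)
        = ((Matrix.of fun p j => pd k (fun y => (A y)⁻¹ p j) x) *ᵥ F x
            + (A x)⁻¹ *ᵥ (fun j => pd k (fun y => F y j) x)) ⬝ᵥ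
            ((Matrix.of fun p j => pd k (fun y => (A y)⁻¹ p j) x) *ᵥ G x)
          + ((A x)⁻¹ *ᵥ F x) ⬝ᵥ
            ((Matrix.of fun p j => pd k (fun y => (A y)⁻¹ p j) x) *ᵥ
              (fun j => pd k (fun y => G y j) x)) := by
      rw [Finset.sum_congr rfl fun p (_ : p ∈ Finset.univ) => Finset.sum_congr rfl
        fun q (_ : q ∈ Finset.univ) => by
          rw [pd_mul k (sdiff (smFt p) x) (sdiff (smG q) x)]]
      rw [← b1, ← hFtvec]
      simp only [dotProduct, Matrix.mulVec, Matrix.of_apply, Finset.mul_sum]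
      rw [← Finset.sum_add_distrib]
      refine Finset.sum_congr rfl fun p _ => ?_
      rw [← Finset.sum_add_distrib]
      refine Finset.sum_congr rfl fun q _ => ?_
      ring
    rw [b3, b4, S5k _ _ (hsym x k)]
    rw [show Smat A x = ((A x) * (A x)ᵀ)⁻¹ from rfl, smat_eq]
  -- integrability of the pieces
  have sme : sm fun x : Euc d => Real.exp (-V x) := smooth_expV hV
  have intP1 : ∀ p, Integrable (fun x : Euc d =>
      Ftd A F x p * Lop V (fun y => Ftd A G y p) x * Real.exp (-V x)) := by
    intro p
    refine Continuous.integrable_of_hasCompactSupport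
      (((smFt p).continuous.mul (smooth_Lop hV (smGt p)).continuous).mul sme.continuous) ?_
    exact HasCompactSupport.intro hcF fun x hx => by rw [hFtzero x hx p]; ring
  have intP2 : ∀ p q, Integrable (fun x : Euc d =>
      Ftd A F x p * G x q * Lop V (fun y => (A y)⁻¹ p q) x * Real.exp (-V x)) := by
    intro p q
    refine Continuous.integrable_of_hasCompactSupport
      ((((smFt p).continuous.mul (smG q).continuous).mul
        (smooth_Lop hV (hB p q)).continuous).mul sme.continuous) ?_
    exact HasCompactSupport.intro hcF fun x hx => by rw [hFtzero x hx p]; ring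
  have intQ1 : ∀ p, Integrable (fun x : Euc d =>
      (∑ k, pd k (fun y => Ftd A F y p) x * pd k (fun y => Ftd A G y p) x)
        * Real.exp (-V x)) := by
    intro p
    refine Continuous.integrable_of_hasCompactSupport
      ((continuous_finset_sum _ fun k _ => (smooth_pd (smFt p) k).continuous.mul
        (smooth_pd (smGt p) k).continuous).mul sme.continuous) ?_
    refine HasCompactSupport.intro hcF fun x hx => ?_
    rw [Finset.sum_eq_zero fun k _ => by
      rw [hpdzero _ (fun z hz => hFtzero z hz p) x hx k]; ring]
    ring
  have intQ2 : ∀ p q, Integrable (fun x : Euc d =>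
      (∑ k, pd k (fun y => Ftd A F y p * G y q) x * pd k (fun y => (A y)⁻¹ p q) x)
        * Real.exp (-V x)) := by
    intro p q
    refine Continuous.integrable_of_hasCompactSupport
      ((continuous_finset_sum _ fun k _ => (smooth_pd ((smFt p).mul (smG q)) k).continuous.mul
        (smooth_pd (hB p q) k).continuous).mul sme.continuous) ?_
    refine HasCompactSupport.intro hcF fun x hx => ?_
    rw [Finset.sum_eq_zero fun k _ => by
      rw [hpdzero _ (fun z hz => by rw [hFtzero z hz p]; ring) x hx k]; ring]
    ring
  -- rewrite the left-hand side
  have hL1 : (fun x : Euc d => Real.exp (-V x) * (F x ⬝ᵥ (Smat A x *ᵥ LA V A G x)))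
      = fun x : Euc d =>
        (∑ p, Ftd A F x p * Lop V (fun y => Ftd A G y p) x * Real.exp (-V x))
          - ∑ p, ∑ q, Ftd A F x p * G x q * Lop V (fun y => (A y)⁻¹ p q) x
              * Real.exp (-V x) := by
    funext x
    rw [S1 x, mul_sub, Finset.mul_sum, Finset.mul_sum]
    congr 1
    · exact Finset.sum_congr rfl fun p _ => by ring
    · exact Finset.sum_congr rfl fun p _ => by
        rw [Finset.mul_sum]; exact Finset.sum_congr rfl fun q _ => by ring
  have hR1 : (fun x : Euc d => Real.exp (-V x) * ∑ k,
        (fun i => pd k (fun y => F y i) x) ⬝ᵥ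
          (Smat A x *ᵥ fun i => pd k (fun y => G y i) x))
      = fun x : Euc d =>
        (∑ p, (∑ k, pd k (fun y => Ftd A F y p) x * pd k (fun y => Ftd A G y p) x)
            * Real.exp (-V x))
          - ∑ p, ∑ q, (∑ k, pd k (fun y => Ftd A F y p * G y q) x
              * pd k (fun y => (A y)⁻¹ p q) x) * Real.exp (-V x) := by
    funext x
    rw [← S5 x, mul_sub, Finset.mul_sum, Finset.mul_sum]
    congr 1
    · exact Finset.sum_congr rfl fun p _ => by ring
    · exact Finset.sum_congr rfl fun p _ => by
        rw [Finset.mul_sum]; exact Finset.sum_congr rfl fun q _ => by ring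
  rw [hL1, hR1]
  rw [integral_sub (integrable_finset_sum _ fun p _ => intP1 p)
      (integrable_finset_sum _ fun p _ => integrable_finset_sum _ fun q _ => intP2 p q),
    integral_sub (integrable_finset_sum _ fun p _ => intQ1 p)
      (integrable_finset_sum _ fun p _ => integrable_finset_sum _ fun q _ => intQ2 p q),
    integral_finset_sum _ (fun p _ => intP1 p),
    integral_finset_sum _ (fun p _ => integrable_finset_sum _ fun q _ => intP2 p q),
    integral_finset_sum _ (fun p _ => intQ1 p),
    integral_finset_sum _ (fun p _ => integrable_finset_sum _ fun q _ => intQ2 p q)]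
  rw [Finset.sum_congr rfl fun p (_ : p ∈ Finset.univ) =>
      integral_finset_sum Finset.univ (fun q _ => intP2 p q),
    Finset.sum_congr rfl fun p (_ : p ∈ Finset.univ) =>
      integral_finset_sum Finset.univ (fun q _ => intQ2 p q)]
  rw [Finset.sum_congr rfl fun p (_ : p ∈ Finset.univ) =>
      ibp hd hV (smFt p) (hcFt p) (smGt p)]
  rw [Finset.sum_congr rfl fun p (_ : p ∈ Finset.univ) => Finset.sum_congr rfl
      fun q (_ : q ∈ Finset.univ) => ibp hd hV ((smFt p).mul (smG q)) (hcFtG p q) (hB p q)]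
  simp only [Finset.sum_neg_distrib]
  ring

lemma gibbs_integral {d : ℕ} {V : Euc d → ℝ} (hV : Continuous V) (f : Euc d → ℝ) :
    ∫ x, f x ∂(gibbs V)
      = ((ENNReal.ofReal (∫ x : Euc d, Real.exp (-V x)))⁻¹).toReal
          * ∫ x : Euc d, Real.exp (-V x) * f x := by
  unfold gibbs
  rw [integral_smul_measure]
  rw [show (fun x : Euc d => ENNReal.ofReal (Real.exp (-V x)))
      = fun x => ((Real.exp (-V x)).toNNReal : ENNReal) from rfl]
  rw [integral_withDensity_eq_integral_smul
      (f := fun x : Euc d => (Real.exp (-V x)).toNNReal)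
      (Measurable.real_toNNReal (Continuous.measurable (Real.continuous_exp.comp hV.neg))) f]
  simp only [NNReal.smul_def, Real.coe_toNNReal _ (Real.exp_nonneg _), smul_eq_mul]

/-- symmetry and non-positivity of `𝕃_A` in `L²(S,μ)`. -/
theorem stmt_2 {d : ℕ} (hd : 1 ≤ d) (V : Euc d → ℝ) (hV : ContDiff ℝ (⊤ : ℕ∞) V)
    (hVint : Integrable fun x : Euc d => Real.exp (-V x))
    (A : Euc d → Matrix (Fin d) (Fin d) ℝ)
    (hA : ∀ i j, ContDiff ℝ (⊤ : ℕ∞) fun x => A x i j)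
    (hAinv : ∀ x, IsUnit (A x).det)
    (hsym : ∀ (x : Euc d) (k : Fin d),
      (((A x)⁻¹)ᵀ * Matrix.of fun i j => pd k (fun y => (A y)⁻¹ i j) x).IsSymm) :
    (∀ F G : Euc d → Euc d,
      ContDiff ℝ (⊤ : ℕ∞) F → HasCompactSupport F →
      ContDiff ℝ (⊤ : ℕ∞) G → HasCompactSupport G →
      (∫ x, LA V A F x ⬝ᵥ (Smat A x *ᵥ G x) ∂(gibbs V))
          = (∫ x, F x ⬝ᵥ (Smat A x *ᵥ LA V A G x) ∂(gibbs V))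
      ∧ (∫ x, F x ⬝ᵥ (Smat A x *ᵥ LA V A G x) ∂(gibbs V))
          = - ∫ x, ∑ k, (fun i => pd k (fun y => F y i) x) ⬝ᵥ
              (Smat A x *ᵥ fun i => pd k (fun y => G y i) x) ∂(gibbs V))
    ∧ ∀ F : Euc d → Euc d, ContDiff ℝ (⊤ : ℕ∞) F → HasCompactSupport F →
        (∫ x, LA V A F x ⬝ᵥ (Smat A x *ᵥ F x) ∂(gibbs V)) ≤ 0 := by
  have hVc : Continuous V := hV.continuous
  have main : ∀ F G : Euc d → Euc d, ContDiff ℝ (⊤ : ℕ∞) F → HasCompactSupport F →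
      ContDiff ℝ (⊤ : ℕ∞) G → HasCompactSupport G →
      (∫ x, F x ⬝ᵥ (Smat A x *ᵥ LA V A G x) ∂(gibbs V))
        = - ∫ x, ∑ k, (fun i => pd k (fun y => F y i) x) ⬝ᵥ
            (Smat A x *ᵥ fun i => pd k (fun y => G y i) x) ∂(gibbs V) := by
    intro F G hF hcF hG hcG
    rw [gibbs_integral hVc, gibbs_integral hVc,
      key hd hV hA hAinv hsym hF hcF hG hcG]
    ring
  have hsymdot : ∀ (x : Euc d) (a b : Euc d),
      a ⬝ᵥ (Smat A x *ᵥ b) = b ⬝ᵥ (Smat A x *ᵥ a) := fun x a b => dot_smat_symm (A x) a b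
  have hswap : ∀ F G : Euc d → Euc d,
      (∫ x, LA V A F x ⬝ᵥ (Smat A x *ᵥ G x) ∂(gibbs V))
        = ∫ x, G x ⬝ᵥ (Smat A x *ᵥ LA V A F x) ∂(gibbs V) :=
    fun F G => integral_congr_ae (Filter.Eventually.of_forall fun x =>
      hsymdot x (LA V A F x) (G x))
  have hswapsum : ∀ F G : Euc d → Euc d,
      (∫ x, ∑ k, (fun i => pd k (fun y => G y i) x) ⬝ᵥ
          (Smat A x *ᵥ fun i => pd k (fun y => F y i) x) ∂(gibbs V))
        = ∫ x, ∑ k, (fun i => pd k (fun y => F y i) x) ⬝ᵥ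
            (Smat A x *ᵥ fun i => pd k (fun y => G y i) x) ∂(gibbs V) :=
    fun F G => integral_congr_ae (Filter.Eventually.of_forall fun x =>
      Finset.sum_congr rfl fun k _ => hsymdot x _ _)
  constructor
  · intro F G hF hcF hG hcG
    refine ⟨?_, main F G hF hcF hG hcG⟩
    rw [hswap F G, main G F hG hcG hF hcF, hswapsum F G, ← main F G hF hcF hG hcG]
  · intro F hF hcF
    rw [hswap F F, main F F hF hcF hF hcF]
    have h0 : 0 ≤ ∫ x, ∑ k, (fun i => pd k (fun y => F y i) x) ⬝ᵥ
        (Smat A x *ᵥ fun i => pd k (fun y => F y i) x) ∂(gibbs V) :=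
      integral_nonneg fun x => Finset.sum_nonneg fun k _ => dot_smat_nonneg (A x) _
    linarith

end
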